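/- Let d ≥ 2 be a real number and define the log-normalizing-constant function f(κ) = (d/2 − 1)·log(κ) − log(I_{d/2−1}(κ)) for κ > 0 (so that the vMF normalizer is C_d(κ) = e^{f(κ)}/(2π)^{d/2}). Then f is differentiable on (0, ∞) and f'(κ) = −I_{d/2}(κ)/I_{d/2−1}(κ). -/

import Mathlib

/-- The modified Bessel function of the first kind of order `ν`, defined for `z > 0` by
`I_ν(z) = ∑_{k=0}^∞ (1/(k! Γ(ν+k+1))) (z/2)^(ν+2k)`. -/
noncomputable def besselI (ν z : ℝ) : ℝ :=
  ∑' k : ℕ, (1 / (k.factorial * Real.Gamma (ν + (k : ℝ) + 1))) * (z / 2) ^ (ν + 2 * (k : ℝ))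

noncomputable def besselG (ν y : ℝ) : ℝ :=
  ∑' k : ℕ, (1 / (k.factorial * Real.Gamma (ν + (k : ℝ) + 1))) * y ^ k

lemma gamma_pos (ν : ℝ) (hν : 0 ≤ ν) (k : ℕ) : 0 < Real.Gamma (ν + (k : ℝ) + 1) :=
  Real.Gamma_pos_of_pos (by positivity)

lemma coef_pos (ν : ℝ) (hν : 0 ≤ ν) (k : ℕ) :
    0 < 1 / (k.factorial * Real.Gamma (ν + (k : ℝ) + 1)) := by
  have := gamma_pos ν hν k
  have : (0:ℝ) < k.factorial := by positivity
  positivity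

lemma summable_aux (ν : ℝ) (hν : 0 ≤ ν) (R : ℝ) :
    Summable (fun k : ℕ => (1 / (k.factorial * Real.Gamma (ν + (k : ℝ) + 1))) * R ^ k) := by
  apply summable_of_ratio_norm_eventually_le (r := 1/2) (by norm_num)
  filter_upwards [Filter.eventually_ge_atTop (⌈2 * |R|⌉₊)] with k hk
  have hΓ := gamma_pos ν hν k
  have hΓ' := gamma_pos ν hν (k+1)
  have hfac : (0:ℝ) < k.factorial := by positivity
  have hfac' : (0:ℝ) < (k+1).factorial := by positivity
  have hrec : Real.Gamma (ν + ((k:ℝ)+1) + 1) = (ν + (k:ℝ) + 1) * Real.Gamma (ν + (k:ℝ) + 1) := by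
    have := Real.Gamma_add_one (s := ν + (k:ℝ) + 1) (by positivity)
    rw [← this]; ring_nf
  have h2 : |R| ≤ ((k:ℝ)+1) / 2 := by
    have : 2 * |R| ≤ (k:ℝ) := le_trans (Nat.le_ceil _) (by exact_mod_cast hk)
    linarith
  calc ‖1 / ((k+1).factorial * Real.Gamma (ν + ((k+1):ℕ) + 1)) * R ^ (k+1)‖
      = (1 / ((k+1).factorial * Real.Gamma (ν + ((k:ℝ)+1) + 1))) * (|R| * |R|^k) := by
        rw [norm_mul, norm_pow, Real.norm_eq_abs, Real.norm_eq_abs, abs_of_pos, pow_succ]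
        · push_cast; ring_nf
        · have := gamma_pos ν hν (k+1); push_cast at this ⊢
          positivity
    _ ≤ 1/2 * ‖1 / (k.factorial * Real.Gamma (ν + (k:ℝ) + 1)) * R ^ k‖ := by
        rw [norm_mul, norm_pow, Real.norm_eq_abs, Real.norm_eq_abs,
          abs_of_pos (coef_pos ν hν k), hrec]
        rw [Nat.factorial_succ]
        push_cast
        rw [div_mul_eq_mul_div, mul_comm (1/2 : ℝ), mul_assoc, div_mul_eq_mul_div, one_mul,
          one_mul]
        rw [div_mul_div_comm, mul_one, div_le_div_iff₀ (by positivity) (by positivity)]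
        have h1 : (1:ℝ) ≤ ν + (k:ℝ) + 1 := by
          have : (0:ℝ) ≤ (k:ℝ) := by positivity
          linarith
        have hP : (0:ℝ) ≤ |R|^k * (k.factorial * Real.Gamma (ν + (k:ℝ) + 1)) := by positivity
        calc |R| * |R| ^ k * ((k.factorial : ℝ) * Real.Gamma (ν + (k:ℝ) + 1) * 2)
            = (|R| * 2) * (|R|^k * (k.factorial * Real.Gamma (ν + (k:ℝ) + 1))) := by ring
          _ ≤ ((k:ℝ)+1) * (|R|^k * (k.factorial * Real.Gamma (ν + (k:ℝ) + 1))) :=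
              mul_le_mul_of_nonneg_right (by linarith) hP
          _ ≤ (((k:ℝ)+1) * (ν + (k:ℝ) + 1)) * (|R|^k * (k.factorial * Real.Gamma (ν + (k:ℝ) + 1))) := by
              apply mul_le_mul_of_nonneg_right _ hP
              nlinarith
          _ = |R| ^ k * (((k:ℝ) + 1) * ((k.factorial : ℝ) * ((ν + (k:ℝ) + 1) * Real.Gamma (ν + (k:ℝ) + 1)))) := by ring

lemma summable_G (ν : ℝ) (hν : 0 ≤ ν) (y : ℝ) :
    Summable (fun k : ℕ => (1 / (k.factorial * Real.Gamma (ν + (k : ℝ) + 1))) * y ^ k) :=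
  summable_aux ν hν y

lemma besselG_pos (ν : ℝ) (hν : 0 ≤ ν) (y : ℝ) (hy : 0 < y) : 0 < besselG ν y := by
  have hs := summable_G ν hν y
  refine Summable.tsum_pos hs (fun k => ?_) 0 ?_
  · exact le_of_lt (mul_pos (coef_pos ν hν k) (pow_pos hy k))
  · exact mul_pos (coef_pos ν hν 0) (pow_pos hy 0)

lemma coef_shift (ν : ℝ) (hν : 0 ≤ ν) (k : ℕ) :
    (1 / ((k+1).factorial * Real.Gamma (ν + ((k+1):ℕ) + 1))) * (((k:ℝ)+1)) =
      1 / (k.factorial * Real.Gamma ((ν+1) + (k : ℝ) + 1)) := by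
  have h1 : ν + (((k+1):ℕ):ℝ) + 1 = (ν+1) + (k:ℝ) + 1 := by push_cast; ring
  rw [h1, Nat.factorial_succ]
  have hΓ : 0 < Real.Gamma ((ν+1) + (k:ℝ) + 1) := by
    apply Real.Gamma_pos_of_pos; positivity
  have hfac : (0:ℝ) < k.factorial := by positivity
  push_cast
  field_simp

lemma besselG_hasDerivAt (ν : ℝ) (hν : 0 ≤ ν) (y : ℝ) :
    HasDerivAt (besselG ν) (besselG (ν+1) y) y := by
  set a : ℕ → ℝ := fun k => 1 / (k.factorial * Real.Gamma (ν + (k : ℝ) + 1)) with ha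
  set a' : ℕ → ℝ := fun k => 1 / (k.factorial * Real.Gamma ((ν+1) + (k : ℝ) + 1)) with ha'
  set R : ℝ := |y| + 1 with hR
  have hRpos : 0 < R := by positivity
  set u : ℕ → ℝ := fun k => a k * (k * R^(k-1)) with hu
  have hu1 : ∀ k : ℕ, u (k+1) = a' k * R ^ k := by
    intro k
    have := coef_shift ν hν k
    simp only [hu, ha, ha', Nat.add_sub_cancel]
    push_cast
    push_cast at this
    linear_combination R ^ k * this
  have husum : Summable u := by
    rw [← summable_nat_add_iff 1]
    simp only [hu1]
    exact summable_aux (ν+1) (by linarith) R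
  have key := hasDerivAt_tsum_of_isPreconnected (u := u)
    (g := fun k x => a k * x ^ k) (g' := fun k x => a k * ((k:ℝ) * x ^ (k-1)))
    husum Metric.isOpen_ball ((convex_ball (0:ℝ) R).isPreconnected)
    (t := Metric.ball (0:ℝ) R) (y₀ := 0) (y := y)
    (fun k x hx => (hasDerivAt_pow k x).const_mul (a k))
    (fun k x hx => ?_) (Metric.mem_ball_self hRpos)
    ?_ (by simp [Metric.mem_ball, Real.dist_eq, hR])
  · have hval : (∑' k : ℕ, a k * ((k:ℝ) * y ^ (k-1))) = besselG (ν+1) y := by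
      have hsum : Summable (fun k : ℕ => a k * ((k:ℝ) * y ^ (k-1))) := by
        apply husum.of_norm_bounded
        intro k
        simp only [hu, norm_mul, Real.norm_eq_abs]
        rw [abs_of_pos (coef_pos ν hν k)]
        apply mul_le_mul_of_nonneg_left _ (coef_pos ν hν k).le
        rw [Nat.abs_cast, abs_pow]
        apply mul_le_mul_of_nonneg_left _ (Nat.cast_nonneg k)
        apply pow_le_pow_left₀ (abs_nonneg y)
        simp [hR]
      rw [Summable.tsum_eq_zero_add hsum]
      simp only [Nat.cast_zero, zero_mul, mul_zero, zero_add]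
      unfold besselG
      apply tsum_congr
      intro k
      have := hu1 k
      have h2 : a (k+1) * (((k:ℝ)+1) * y ^ k) = a' k * y ^ k := by
        have hc := coef_shift ν hν k
        simp only [ha, ha'] at hc ⊢
        push_cast at hc ⊢
        linear_combination y ^ k * hc
      simp only [Nat.add_sub_cancel, Nat.cast_add, Nat.cast_one]
      exact h2
    rw [hval] at key
    exact key
  · -- bound
    simp only [Metric.mem_ball, Real.dist_eq, sub_zero] at hx
    simp only [hu, norm_mul, Real.norm_eq_abs]
    rw [abs_of_pos (coef_pos ν hν k)]
    apply mul_le_mul_of_nonneg_left _ (coef_pos ν hν k).le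
    rw [Nat.abs_cast, abs_pow]
    apply mul_le_mul_of_nonneg_left _ (Nat.cast_nonneg k)
    exact pow_le_pow_left₀ (abs_nonneg x) (le_of_lt hx) _
  · -- summable at 0
    exact (summable_G ν hν 0)

lemma besselI_eq (ν z : ℝ) (hz : 0 < z) :
    besselI ν z = (z/2) ^ ν * besselG ν ((z/2)^2) := by
  have hz2 : 0 < z/2 := by linarith
  unfold besselI besselG
  rw [← tsum_mul_left]
  apply tsum_congr
  intro k
  have h1 : (z/2) ^ (ν + 2 * (k:ℝ)) = (z/2) ^ ν * ((z/2)^2) ^ k := by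
    rw [Real.rpow_add hz2]
    congr 1
    have : (2 : ℝ) * (k : ℝ) = ((2 * k : ℕ) : ℝ) := by push_cast; ring
    rw [this, Real.rpow_natCast, pow_mul]
  rw [h1]; ring

theorem vMF_log_normalizer_deriv (d : ℝ) (hd : 2 ≤ d) (κ : ℝ) (hκ : 0 < κ) :
    HasDerivAt (fun t : ℝ => (d/2 - 1) * Real.log t - Real.log (besselI (d/2 - 1) t))
      (-(besselI (d/2) κ / besselI (d/2 - 1) κ)) κ := by
  set ν : ℝ := d/2 - 1 with hνdef
  have hν : 0 ≤ ν := by simp only [hνdef]; linarith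
  have hκ2 : 0 < κ/2 := by linarith
  set y : ℝ := (κ/2)^2 with hydef
  have hy : 0 < y := by positivity
  have hG : 0 < besselG ν y := besselG_pos ν hν y hy
  -- inner derivative
  have hinner : HasDerivAt (fun t : ℝ => (t/2)^2) (κ/2) κ := by
    have h := ((hasDerivAt_id κ).div_const 2).pow 2
    convert h using 1
    · rfl
    · rfl
    · funext t; simp
    simp; ring
  have hcomp : HasDerivAt (fun t : ℝ => besselG ν ((t/2)^2))
      (besselG (ν+1) y * (κ/2)) κ :=
    by have := (besselG_hasDerivAt ν hν y).comp κ hinner; exact this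
  have hlog : HasDerivAt (fun t : ℝ => Real.log (besselG ν ((t/2)^2)))
      ((besselG (ν+1) y * (κ/2)) / besselG ν y) κ := hcomp.log hG.ne'
  have hmain : HasDerivAt (fun t : ℝ => ν * Real.log 2 - Real.log (besselG ν ((t/2)^2)))
      (0 - (besselG (ν+1) y * (κ/2)) / besselG ν y) κ :=
    (hasDerivAt_const κ (ν * Real.log 2)).sub hlog
  have heq : (fun t : ℝ => (d/2 - 1) * Real.log t - Real.log (besselI (d/2 - 1) t))
      =ᶠ[nhds κ] (fun t : ℝ => ν * Real.log 2 - Real.log (besselG ν ((t/2)^2))) := by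
    filter_upwards [eventually_gt_nhds hκ] with t ht
    have ht2 : 0 < t/2 := by linarith
    have hGt : 0 < besselG ν ((t/2)^2) := besselG_pos ν hν _ (by positivity)
    rw [besselI_eq ν t ht, Real.log_mul (by positivity) hGt.ne', Real.log_rpow ht2,
      Real.log_div (by linarith) (by norm_num)]
    ring
  have hfinal := hmain.congr_of_eventuallyEq heq
  convert hfinal using 1
  · rfl
  · rfl
  have hd2 : d/2 = ν + 1 := by simp [hνdef]
  rw [hd2, besselI_eq (ν+1) κ hκ, besselI_eq ν κ hκ,
    Real.rpow_add_one (ne_of_gt hκ2)]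
  have hpow : (0:ℝ) < (κ/2) ^ ν := Real.rpow_pos_of_pos hκ2 ν
  rw [← hydef]
  field_simp
  ring
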